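/- Let d ≥ 2 be an integer and λ, c > 0. Define f : (0,∞) → ℝ by f(w) = Σ_{k=1}^∞ (λ/(2c))^{k(d−1)} w^{k(d−1)−2} / ( Γ(k(d−1)/2) · Γ((d−1)(k+1)/2) ). Then f satisfies the iterated hyper-Bessel ordinary differential equation T^{(d−1)} f (w) = (λ/c)^{2(d−1)} f(w) for all w > 0, where (T g)(w) = g''(w) + (d/w) g'(w) and T^{(r)} denotes the r-fold iterate of T. -/

import Mathlib

open Real

set_option maxHeartbeats 1600000
-- Gamma monotonicity lemmas
lemma my_gamma_one_le {x : ℝ} (hx : 2 ≤ x) : 1 ≤ Real.Gamma x := by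
  rcases eq_or_lt_of_le hx with h | h
  · rw [← h, Real.Gamma_two]
  · have h1 : (1:ℝ) ∈ Set.Ioi (0:ℝ) := by norm_num
    have hx0 : x ∈ Set.Ioi (0:ℝ) := by simp only [Set.mem_Ioi]; linarith
    have key := Real.convexOn_Gamma.slope_mono_adjacent h1 hx0 (by norm_num) h
    rw [Real.Gamma_two, Real.Gamma_one] at key
    norm_num at key
    have hx2 : (0:ℝ) < x - 2 := by linarith
    have := (le_div_iff₀ hx2).mp key
    linarith

lemma my_gamma_mono {x y : ℝ} (hx : 2 ≤ x) (hxy : x ≤ y) :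
    Real.Gamma x ≤ Real.Gamma y := by
  rcases eq_or_lt_of_le hxy with h | h
  · rw [h]
  · have h1 : (1:ℝ) ∈ Set.Ioi (0:ℝ) := by norm_num
    have hy0 : y ∈ Set.Ioi (0:ℝ) := by simp only [Set.mem_Ioi]; linarith
    have key := Real.convexOn_Gamma.slope_mono_adjacent h1 hy0 (by linarith) h
    rw [Real.Gamma_one] at key
    have hgx : 1 ≤ Real.Gamma x := my_gamma_one_le hx
    have h1x : (0:ℝ) < x - 1 := by linarith
    have hxy' : (0:ℝ) < y - x := by linarith
    have h0 : (0:ℝ) ≤ (Real.Gamma x - 1)/(x-1) := div_nonneg (by linarith) h1x.le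
    have := (le_div_iff₀ hxy').mp (le_trans h0 key)
    linarith

lemma my_factorial_le_gamma {n : ℕ} {x : ℝ} (h2 : 2 ≤ x) (hn : (n:ℝ) + 1 ≤ x) :
    (n.factorial : ℝ) ≤ Real.Gamma x := by
  rcases Nat.eq_zero_or_pos n with h | h
  · subst h; simpa using my_gamma_one_le h2
  · have h2' : (2:ℝ) ≤ (n:ℝ) + 1 := by
      have : (1:ℝ) ≤ (n:ℝ) := by exact_mod_cast h
      linarith
    have := my_gamma_mono h2' hn
    rwa [Real.Gamma_nat_eq_factorial] at this

lemma my_gamma_add_nat {x : ℝ} (hx : 0 < x) (n : ℕ) :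
    Real.Gamma (x + n) = (∏ i ∈ Finset.range n, (x + i)) * Real.Gamma x := by
  induction n with
  | zero => simp
  | succ n ih =>
    have hxn : x + (n:ℝ) ≠ 0 := by positivity
    have h1 : Real.Gamma (x + (n:ℝ) + 1) = (x + n) * Real.Gamma (x + n) :=
      Real.Gamma_add_one hxn
    have h2 : x + ((n:ℕ)+1 : ℕ) = x + (n:ℝ) + 1 := by push_cast; ring
    rw [h2, h1, ih, Finset.prod_range_succ]
    ring

lemma my_choose_le_two_pow (n i : ℕ) : n.choose i ≤ 2^n := by
  rcases le_or_gt i n with h | h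
  · calc n.choose i ≤ ∑ j ∈ Finset.range (n+1), n.choose j :=
        Finset.single_le_sum (fun _ _ => Nat.zero_le _) (Finset.mem_range.mpr (Nat.lt_succ_of_le h))
    _ = 2^n := Nat.sum_range_choose n
  · simp [Nat.choose_eq_zero_of_lt h]


noncomputable def aCo (d : ℕ) (lam c : ℝ) (k : ℕ) : ℝ :=
  (lam / (2 * c)) ^ ((k + 1) * (d - 1)) /
    (Real.Gamma (((k : ℝ) + 1) * ((d : ℝ) - 1) / 2) *
      Real.Gamma (((d : ℝ) - 1) * (((k : ℝ) + 1) + 1) / 2))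

/-- `(K-1)! ≤ 2^K * ((K-1)/2)! * (K/2)!` in ℕ. -/
lemma my_fact_split (K : ℕ) (hK : 1 ≤ K) :
    (K-1).factorial ≤ 2^K * ((K-1)/2).factorial * (K/2).factorial := by
  set n := K - 1 with hn
  have h1 : (K)/2 = n - n/2 := by omega
  have h2 : n/2 ≤ n := Nat.div_le_self _ _
  calc n.factorial = n.choose (n/2) * ((n/2).factorial * (n - n/2).factorial) := by
        rw [← Nat.choose_mul_factorial_mul_factorial h2]; ring
    _ ≤ 2^n * ((n/2).factorial * (n - n/2).factorial) :=
        Nat.mul_le_mul_right _ (my_choose_le_two_pow n (n/2))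
    _ ≤ 2^K * ((n/2).factorial * (n - n/2).factorial) := by
        have : (2:ℕ)^n ≤ 2^K := Nat.pow_le_pow_right (by norm_num) (by omega)
        exact Nat.mul_le_mul_right _ this
    _ = 2^K * (n/2).factorial * (K/2).factorial := by rw [h1]; ring

/-- master summability for the raw coefficients with polynomial slack -/
lemma sumD_aCo (d : ℕ) (hd : 2 ≤ d) (lam c : ℝ) (hlam : 0 < lam) (hc : 0 < c)
    (m : ℕ) {r : ℝ} (hr : 0 < r) :
    Summable (fun k => |aCo d lam c k| * ((k:ℝ)+1)^m * r^k) := by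
  have hε : (1:ℝ) ≤ (d:ℝ) - 1 := by
    have : (2:ℝ) ≤ (d:ℝ) := by exact_mod_cast hd
    linarith
  set ε := (d:ℝ) - 1 with hεdef
  have hρ : 0 < lam / (2*c) := by positivity
  set ρ := lam / (2*c) with hρdef
  set M : ℝ := max (ρ ^ (d-1)) 1 with hM
  have hM1 : (1:ℝ) ≤ M := le_max_right _ _
  have hM0 : (0:ℝ) < M := lt_of_lt_of_le one_pos hM1
  set Q : ℝ := 2^(m+1) * (M * (2 * r)) with hQ
  have hQ0 : 0 < Q := by positivity
  -- the majorant
  have hmaj : Summable (fun K : ℕ => (M * 2^(m+1)) * (Q^K / K.factorial)) :=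
    (Real.summable_pow_div_factorial Q).mul_left _
  rw [← summable_nat_add_iff 3]
  apply Summable.of_nonneg_of_le (fun k => by positivity)
    (fun k => ?_) ((summable_nat_add_iff 3).mpr hmaj)
  set K := k + 3 with hKdef
  have hK3 : (3:ℝ) ≤ (K:ℝ) := by exact_mod_cast Nat.le_add_left 3 k
  have hKpos : (0:ℝ) < K := by linarith
  -- Gamma lower bounds
  set n₁ := (K-1)/2 with hn₁
  set n₂ := K/2 with hn₂
  have hg1 : (n₁.factorial : ℝ) ≤ Real.Gamma (((K:ℝ)+1) * ε / 2) := by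
    apply my_factorial_le_gamma
    · nlinarith
    · have h1 : (n₁:ℝ) ≤ ((K:ℝ)-1)/2 := by
        have := Nat.cast_div_le (α := ℝ) (m := K-1) (n := 2)
        have hc1 : ((K-1:ℕ):ℝ) = (K:ℝ) - 1 := by
          have : 1 ≤ K := by omega
          push_cast [this]; ring
        rw [hc1] at this; push_cast at this ⊢; linarith
      nlinarith
  have hg2 : (n₂.factorial : ℝ) ≤ Real.Gamma (ε * (((K:ℝ)+1)+1) / 2) := by
    apply my_factorial_le_gamma
    · nlinarith
    · have h1 : (n₂:ℝ) ≤ (K:ℝ)/2 := by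
        have := Nat.cast_div_le (α := ℝ) (m := K) (n := 2)
        push_cast at this ⊢; linarith
      nlinarith
  -- factorial split
  have hsplit : ((K-1).factorial : ℝ) ≤ 2^K * (n₁.factorial : ℝ) * (n₂.factorial : ℝ) := by
    exact_mod_cast my_fact_split K (by omega)
  have hΓ1pos : 0 < Real.Gamma (((K:ℝ)+1) * ε / 2) := Real.Gamma_pos_of_pos (by nlinarith)
  have hΓ2pos : 0 < Real.Gamma (ε * (((K:ℝ)+1)+1) / 2) := Real.Gamma_pos_of_pos (by nlinarith)
  have hfac : ((K-1).factorial : ℝ) ≤ 2^K *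
      (Real.Gamma (((K:ℝ)+1) * ε / 2) * Real.Gamma (ε * (((K:ℝ)+1)+1) / 2)) := by
    calc ((K-1).factorial : ℝ) ≤ 2^K * (n₁.factorial : ℝ) * (n₂.factorial : ℝ) := hsplit
    _ ≤ 2^K * (Real.Gamma (((K:ℝ)+1) * ε / 2) * Real.Gamma (ε * (((K:ℝ)+1)+1) / 2)) := by
        have h2K : (0:ℝ) < 2^K := by positivity
        have := mul_le_mul hg1 hg2 (by positivity) hΓ1pos.le
        nlinarith [this]
  -- bound |aCo|
  have hfk : (0:ℝ) < ((K-1).factorial : ℝ) := by positivity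
  have hKfacpos : (0:ℝ) < (K.factorial : ℝ) := by positivity
  have hKfac : (K.factorial : ℝ) = (K:ℝ) * ((K-1).factorial : ℝ) := by
    exact_mod_cast (Nat.mul_factorial_pred (by omega : K ≠ 0)).symm
  have haCo : |aCo d lam c K| ≤ ρ ^ ((K+1)*(d-1)) * 2^K / ((K-1).factorial : ℝ) := by
    have habs : |aCo d lam c K| = ρ ^ ((K+1)*(d-1)) /
        (Real.Gamma (((K:ℝ)+1) * ε / 2) * Real.Gamma (ε * (((K:ℝ)+1)+1) / 2)) := by
      rw [aCo, abs_of_pos (div_pos (by positivity) (mul_pos hΓ1pos hΓ2pos))]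
    rw [habs]
    have hcle : ((K-1).factorial : ℝ)/2^K ≤
        Real.Gamma (((K:ℝ)+1) * ε / 2) * Real.Gamma (ε * (((K:ℝ)+1)+1) / 2) := by
      rw [div_le_iff₀ (by positivity : (0:ℝ) < 2^K)]
      linarith [hfac]
    calc ρ ^ ((K+1)*(d-1)) /
        (Real.Gamma (((K:ℝ)+1) * ε / 2) * Real.Gamma (ε * (((K:ℝ)+1)+1) / 2))
        ≤ ρ ^ ((K+1)*(d-1)) / (((K-1).factorial : ℝ)/2^K) := by
          apply div_le_div_of_nonneg_left (by positivity) (by positivity) hcle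
      _ = ρ ^ ((K+1)*(d-1)) * 2^K / ((K-1).factorial : ℝ) := by
          rw [div_div_eq_mul_div]
  have haCo2 : |aCo d lam c K| ≤ M^(K+1) * 2^K * (K:ℝ) / (K.factorial : ℝ) := by
    refine haCo.trans ?_
    rw [div_le_div_iff₀ hfk hKfacpos, hKfac]
    have hρM : ρ^((K+1)*(d-1)) ≤ M^(K+1) := by
      calc ρ^((K+1)*(d-1)) = (ρ^(d-1))^(K+1) := by rw [← pow_mul, Nat.mul_comm]
      _ ≤ M^(K+1) := pow_le_pow_left₀ (by positivity) (le_max_left _ _) _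
    have h0 : (0:ℝ) ≤ 2^K * ((K:ℝ) * ((K-1).factorial : ℝ)) := by positivity
    calc ρ ^ ((K+1)*(d-1)) * 2^K * ((K:ℝ) * ((K-1).factorial : ℝ))
        = ρ ^ ((K+1)*(d-1)) * (2^K * ((K:ℝ) * ((K-1).factorial : ℝ))) := by ring
      _ ≤ M^(K+1) * (2^K * ((K:ℝ) * ((K-1).factorial : ℝ))) :=
          mul_le_mul_of_nonneg_right hρM h0
      _ = M^(K+1) * 2^K * (K:ℝ) * ((K-1).factorial : ℝ) := by ring
  -- final chain
  have hnum : M^(K+1) * 2^K * (K:ℝ) * (((K:ℝ)+1)^m * r^K) ≤ M * 2^(m+1) * Q^K := by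
    have hQK : Q^K = ((2:ℝ)^(m+1))^K * (M^K * (2^K * r^K)) := by
      rw [hQ, mul_pow, mul_pow, mul_pow]
    have hpoly : (K:ℝ) * ((K:ℝ)+1)^m ≤ 2^(m+1) * ((2:ℝ)^(m+1))^K := by
      have hK2 : (K:ℝ)+1 ≤ 2 * 2^K := by
        have h := Nat.lt_two_pow_self (n := K)
        have h' : (K:ℝ) < 2^K := by exact_mod_cast h
        have h2K : (1:ℝ) ≤ 2^K := one_le_pow₀ (by norm_num : (1:ℝ) ≤ 2)
        linarith
      calc (K:ℝ) * ((K:ℝ)+1)^m ≤ ((K:ℝ)+1)^(m+1) := by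
            rw [pow_succ]
            have hp : (0:ℝ) ≤ ((K:ℝ)+1)^m := by positivity
            nlinarith
        _ ≤ (2*2^K)^(m+1) := pow_le_pow_left₀ (by positivity) hK2 _
        _ = 2^(m+1) * ((2:ℝ)^(m+1))^K := by
            rw [mul_pow, ← pow_mul, ← pow_mul, Nat.mul_comm]
    rw [hQK, pow_succ]
    calc M^K * M * 2^K * (K:ℝ) * (((K:ℝ)+1)^m * r^K)
        = M * ((K:ℝ) * ((K:ℝ)+1)^m) * (M^K * (2^K * r^K)) := by ring
      _ ≤ M * (2^(m+1) * ((2:ℝ)^(m+1))^K) * (M^K * (2^K * r^K)) := by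
          apply mul_le_mul_of_nonneg_right
            (mul_le_mul_of_nonneg_left hpoly hM0.le) (by positivity)
      _ = M * 2^(m+1) * (((2:ℝ)^(m+1))^K * (M^K * (2^K * r^K))) := by ring
  calc |aCo d lam c K| * ((K:ℝ)+1)^m * r^K
      ≤ M^(K+1) * 2^K * (K:ℝ) / (K.factorial : ℝ) * (((K:ℝ)+1)^m * r^K) := by
        rw [mul_assoc]
        exact mul_le_mul_of_nonneg_right haCo2 (by positivity)
    _ = M^(K+1) * 2^K * (K:ℝ) * (((K:ℝ)+1)^m * r^K) / (K.factorial : ℝ) := by ring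
    _ ≤ M * 2^(m+1) * Q^K / (K.factorial : ℝ) := by
        apply div_le_div_of_nonneg_right hnum hKfacpos.le -- maybe wrong name
    _ = M * 2^(m+1) * (Q^K / (K.factorial : ℝ)) := by ring


lemma rpow_split {s : ℝ} (hs : 0 < s) (ε q : ℝ) (k : ℕ) :
    s ^ (((k:ℝ)+1)*ε + q) = (s^ε)^(k+1) * s^q := by
  have h1 : ((k:ℝ)+1)*ε = ε * (((k+1 : ℕ)) : ℝ) := by push_cast; ring
  rw [Real.rpow_add hs, h1, Real.rpow_mul hs.le, Real.rpow_natCast]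

lemma summable_rpow_series (b : ℕ → ℝ) (ε q : ℝ)
    (hb : ∀ r : ℝ, 0 < r → Summable (fun k => |b k| * ((k:ℝ)+1) * r ^ k))
    {x : ℝ} (hx : 0 < x) :
    Summable (fun k => b k * x ^ (((k:ℝ)+1)*ε + q)) := by
  have hs : (0:ℝ) < x ^ ε := Real.rpow_pos_of_pos hx ε
  apply Summable.of_norm_bounded (((hb (x^ε) hs).mul_left (x^ε * x^q)))
  intro k
  rw [Real.norm_eq_abs, abs_mul, abs_of_pos (Real.rpow_pos_of_pos hx _),
    rpow_split hx ε q k, pow_succ]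
  have h1 : (1:ℝ) ≤ (k:ℝ)+1 := by
    have : (0:ℝ) ≤ (k:ℝ) := Nat.cast_nonneg k
    linarith
  have h2 : (0:ℝ) ≤ |b k| * ((x^ε)^k * x^ε * x^q) := by positivity
  calc |b k| * ((x^ε)^k * x^ε * x^q) = |b k| * 1 * ((x^ε)^k * x^ε * x^q) := by ring
    _ ≤ |b k| * ((k:ℝ)+1) * ((x^ε)^k * x^ε * x^q) := by
        apply mul_le_mul_of_nonneg_right (mul_le_mul_of_nonneg_left h1 (abs_nonneg _))
        positivity
    _ = x^ε * x^q * (|b k| * ((k:ℝ)+1) * (x^ε)^k) := by ring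

lemma hasDerivAt_rpow_series (b : ℕ → ℝ) (ε q : ℝ) (hε : 0 ≤ ε)
    (hb : ∀ r : ℝ, 0 < r → Summable (fun k => |b k| * ((k:ℝ)+1) * r ^ k))
    {x : ℝ} (hx : 0 < x) :
    HasDerivAt (fun w : ℝ => ∑' k, b k * w ^ (((k:ℝ)+1)*ε + q))
      (∑' k, b k * ((((k:ℝ)+1)*ε + q) * x ^ ((((k:ℝ)+1)*ε + q) - 1))) x := by
  have hx2 : (0:ℝ) < x/2 := by linarith
  have h2x : x < 2*x := by linarith
  have hxt : x ∈ Set.Ioo (x/2) (2*x) := ⟨by linarith, h2x⟩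
  have hs1 : (0:ℝ) < (x/2) ^ ε := Real.rpow_pos_of_pos hx2 ε
  have hs2 : (0:ℝ) < (2*x) ^ ε := Real.rpow_pos_of_pos (by linarith) ε
  set C : ℝ := ε + |q| + 1 with hC
  have hC0 : (0:ℝ) < C := by positivity
  set u : ℕ → ℝ := fun k => |b k| * ((k:ℝ)+1) * C *
      (((x/2)^ε)^(k+1) * (x/2)^(q-1) + ((2*x)^ε)^(k+1) * (2*x)^(q-1)) with hu
  have husum : Summable u := by
    have e1 : Summable (fun k => (C * ((x/2)^ε * (x/2)^(q-1))) *
        (|b k| * ((k:ℝ)+1) * ((x/2)^ε)^k)) := ((hb _ hs1).mul_left _)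
    have e2 : Summable (fun k => (C * ((2*x)^ε * (2*x)^(q-1))) *
        (|b k| * ((k:ℝ)+1) * ((2*x)^ε)^k)) := ((hb _ hs2).mul_left _)
    apply (e1.add e2).congr
    intro k
    rw [hu]; simp only []
    rw [pow_succ, pow_succ]; ring
  have hβ : ∀ k : ℕ, |(((k:ℝ)+1)*ε + q)| ≤ ((k:ℝ)+1) * C := by
    intro k
    have h1 : (1:ℝ) ≤ (k:ℝ)+1 := by
      have : (0:ℝ) ≤ (k:ℝ) := Nat.cast_nonneg k
      linarith
    have hq1 : |q| ≤ ((k:ℝ)+1) * |q| := le_mul_of_one_le_left (abs_nonneg q) h1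
    have hε1 : (0:ℝ) ≤ ((k:ℝ)+1)*ε := mul_nonneg (by linarith) hε
    rw [abs_le, hC]
    constructor
    · nlinarith [neg_abs_le q, hq1]
    · nlinarith [le_abs_self q, hq1]
  refine hasDerivAt_tsum_of_isPreconnected husum isOpen_Ioo isPreconnected_Ioo
    (g := fun k w => b k * w ^ (((k:ℝ)+1)*ε + q))
    (g' := fun k y => b k * ((((k:ℝ)+1)*ε + q) * y ^ ((((k:ℝ)+1)*ε + q) - 1)))
    ?_ ?_ hxt ?_ hxt
  · intro k y hy
    exact (Real.hasDerivAt_rpow_const (Or.inl (ne_of_gt (lt_trans hx2 hy.1)))).const_mul (b k)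
  · intro k y hy
    have hy0 : (0:ℝ) < y := lt_trans hx2 hy.1
    rw [Real.norm_eq_abs, abs_mul, abs_mul,
      abs_of_pos (Real.rpow_pos_of_pos hy0 _)]
    have hble : y ^ ((((k:ℝ)+1)*ε + q) - 1) ≤
        ((x/2)^ε)^(k+1) * (x/2)^(q-1) + ((2*x)^ε)^(k+1) * (2*x)^(q-1) := by
      have hexp : (((k:ℝ)+1)*ε + q) - 1 = ((k:ℝ)+1)*ε + (q-1) := by ring
      rw [hexp, ← rpow_split hx2 ε (q-1) k, ← rpow_split (by linarith : (0:ℝ) < 2*x) ε (q-1) k]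
      rcases le_or_gt 0 (((k:ℝ)+1)*ε + (q-1)) with hp | hp
      · have := Real.rpow_le_rpow hy0.le hy.2.le hp
        have h0 : (0:ℝ) ≤ (x/2) ^ (((k:ℝ)+1)*ε + (q-1)) := (Real.rpow_pos_of_pos hx2 _).le
        linarith
      · have := Real.rpow_le_rpow_of_nonpos hx2 hy.1.le hp.le
        have h0 : (0:ℝ) ≤ (2*x) ^ (((k:ℝ)+1)*ε + (q-1)) :=
          (Real.rpow_pos_of_pos (by linarith) _).le
        linarith
    calc |b k| * (|(((k:ℝ)+1)*ε + q)| * y ^ ((((k:ℝ)+1)*ε + q) - 1))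
        ≤ |b k| * ((((k:ℝ)+1) * C) *
          (((x/2)^ε)^(k+1) * (x/2)^(q-1) + ((2*x)^ε)^(k+1) * (2*x)^(q-1))) := by
          apply mul_le_mul_of_nonneg_left _ (abs_nonneg _)
          apply mul_le_mul (hβ k) hble (Real.rpow_pos_of_pos hy0 _).le (by positivity)
      _ = u k := by rw [hu]; ring
  · exact summable_rpow_series b ε q hb hx


noncomputable def pCo (d : ℕ) (n k : ℕ) : ℝ :=
  ∏ j ∈ Finset.range n,
    ((((k:ℝ)+1)*((d:ℝ)-1) - 2 - 2*(j:ℝ)) * ((((k:ℝ)+1)*((d:ℝ)-1) - 2 - 2*(j:ℝ) + ((d:ℝ)-1))))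

lemma pCo_abs_le (d n k : ℕ) (hε : 1 ≤ (d:ℝ)-1) :
    |pCo d n k| ≤ (((d:ℝ)-1 + 2*n + 2) * (2*((d:ℝ)-1) + 2*n + 2))^n * ((k:ℝ)+1)^(2*n) := by
  have hk0 : (0:ℝ) ≤ (k:ℝ) := Nat.cast_nonneg k
  rw [pCo, Finset.abs_prod]
  calc ∏ j ∈ Finset.range n,
      |(((k:ℝ)+1)*((d:ℝ)-1) - 2 - 2*(j:ℝ)) * ((((k:ℝ)+1)*((d:ℝ)-1) - 2 - 2*(j:ℝ) + ((d:ℝ)-1)))|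
      ≤ ∏ _j ∈ Finset.range n,
        ((((d:ℝ)-1 + 2*n + 2) * (2*((d:ℝ)-1) + 2*n + 2)) * ((k:ℝ)+1)^2) := by
        apply Finset.prod_le_prod (fun _ _ => abs_nonneg _)
        intro j hj
        have hjn : (j:ℝ) < (n:ℝ) := by exact_mod_cast Finset.mem_range.mp hj
        rw [abs_mul]
        have h1 : |(((k:ℝ)+1)*((d:ℝ)-1) - 2 - 2*(j:ℝ))| ≤ (((d:ℝ)-1) + 2*n + 2) * ((k:ℝ)+1) := by
          rw [abs_le]; constructor <;> nlinarith
        have h2 : |(((k:ℝ)+1)*((d:ℝ)-1) - 2 - 2*(j:ℝ) + ((d:ℝ)-1))| ≤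
            (2*((d:ℝ)-1) + 2*n + 2) * ((k:ℝ)+1) := by
          rw [abs_le]; constructor <;> nlinarith
        calc |(((k:ℝ)+1)*((d:ℝ)-1) - 2 - 2*(j:ℝ))| *
            |(((k:ℝ)+1)*((d:ℝ)-1) - 2 - 2*(j:ℝ) + ((d:ℝ)-1))|
            ≤ ((((d:ℝ)-1) + 2*n + 2) * ((k:ℝ)+1)) * ((2*((d:ℝ)-1) + 2*n + 2) * ((k:ℝ)+1)) :=
              mul_le_mul h1 h2 (abs_nonneg _) (by positivity)
          _ = (((d:ℝ)-1 + 2*n + 2) * (2*((d:ℝ)-1) + 2*n + 2)) * ((k:ℝ)+1)^2 := by ring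
    _ = (((d:ℝ)-1 + 2*n + 2) * (2*((d:ℝ)-1) + 2*n + 2))^n * ((k:ℝ)+1)^(2*n) := by
        rw [Finset.prod_const, Finset.card_range, mul_pow, ← pow_mul, Nat.mul_comm 2 n]

lemma pCo_zero0 (d : ℕ) (hd : 2 ≤ d) : pCo d (d-1) 0 = 0 := by
  apply Finset.prod_eq_zero (i := d-2) (Finset.mem_range.mpr (by omega))
  have hc : ((d-2 : ℕ):ℝ) = (d:ℝ) - 2 := by
    have h2 : (2:ℝ) ≤ (d:ℝ) := by exact_mod_cast hd
    push_cast [hd]; ring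
  rw [hc]
  have : (((0:ℕ):ℝ)+1)*((d:ℝ)-1) - 2 - 2*((d:ℝ)-2) + ((d:ℝ)-1) = 0 := by push_cast; ring
  rw [this, mul_zero]

lemma pCo_zero1 (d : ℕ) (hd : 2 ≤ d) : pCo d (d-1) 1 = 0 := by
  apply Finset.prod_eq_zero (i := d-2) (Finset.mem_range.mpr (by omega))
  have hc : ((d-2 : ℕ):ℝ) = (d:ℝ) - 2 := by
    push_cast [hd]; ring
  rw [hc]
  have : (((1:ℕ):ℝ)+1)*((d:ℝ)-1) - 2 - 2*((d:ℝ)-2) = 0 := by push_cast; ring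
  rw [this, zero_mul]

lemma key_identity (d : ℕ) (hd : 2 ≤ d) (lam c : ℝ) (hlam : 0 < lam) (hc : 0 < c) (k : ℕ) :
    aCo d lam c (k+2) * pCo d (d-1) (k+2) = (lam/c)^(2*(d-1)) * aCo d lam c k := by
  have hd1 : (1:ℕ) ≤ d := by omega
  have hεe : (((d-1:ℕ)):ℝ) = (d:ℝ) - 1 := by push_cast [hd1]; ring
  have hε1 : (1:ℝ) ≤ (d:ℝ)-1 := by
    have : (2:ℝ) ≤ (d:ℝ) := by exact_mod_cast hd
    linarith
  have hk0 : (0:ℝ) ≤ (k:ℝ) := Nat.cast_nonneg k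
  set ε := (d:ℝ)-1 with hεdef
  set e := d - 1 with hedef
  set u := ((k:ℝ)+1)*ε/2 with hudef
  set v := ε*(((k:ℝ)+1)+1)/2 with hvdef
  have hu : 0 < u := by rw [hudef]; nlinarith
  have hv : 0 < v := by rw [hvdef]; nlinarith
  have hΓu : 0 < Real.Gamma u := Real.Gamma_pos_of_pos hu
  have hΓv : 0 < Real.Gamma v := Real.Gamma_pos_of_pos hv
  have hPu : (0:ℝ) < ∏ i ∈ Finset.range e, (u + (i:ℝ)) :=
    Finset.prod_pos (fun i _ => by have : (0:ℝ) ≤ (i:ℝ) := Nat.cast_nonneg i; linarith)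
  have hPv : (0:ℝ) < ∏ i ∈ Finset.range e, (v + (i:ℝ)) :=
    Finset.prod_pos (fun i _ => by have : (0:ℝ) ≤ (i:ℝ) := Nat.cast_nonneg i; linarith)
  -- Gamma args at k+2
  have harg1 : (((k+2:ℕ):ℝ)+1)*ε/2 = u + ((e:ℕ):ℝ) := by
    rw [hεe, hudef]; push_cast; ring
  have harg2 : ε*((((k+2:ℕ):ℝ)+1)+1)/2 = v + ((e:ℕ):ℝ) := by
    rw [hεe, hvdef]; push_cast; ring
  -- pCo product formula
  have hpco : pCo d e (k+2) = 4^e * ((∏ i ∈ Finset.range e, (u + (i:ℝ))) *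
      (∏ i ∈ Finset.range e, (v + (i:ℝ)))) := by
    rw [pCo]
    have hterm : ∀ j ∈ Finset.range e,
        ((((k+2:ℕ):ℝ)+1)*((d:ℝ)-1) - 2 - 2*(j:ℝ)) *
          ((((k+2:ℕ):ℝ)+1)*((d:ℝ)-1) - 2 - 2*(j:ℝ) + ((d:ℝ)-1))
        = 4 * ((u + ((e-1-j : ℕ):ℝ)) * (v + ((e-1-j:ℕ):ℝ))) := by
      intro j hj
      have hje : j < e := Finset.mem_range.mp hj
      have hcast : ((e-1-j : ℕ):ℝ) = ε - 1 - (j:ℝ) := by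
        rw [← hεe]
        have : e - 1 - j + j + 1 = e := by omega
        push_cast [Nat.cast_sub (by omega : j ≤ e - 1), Nat.cast_sub (by omega : 1 ≤ e)]
        ring
      rw [hcast, hudef, hvdef]
      push_cast
      try ring
    rw [Finset.prod_congr rfl hterm]
    rw [Finset.prod_mul_distrib, Finset.prod_mul_distrib, Finset.prod_const, Finset.card_range]
    rw [Finset.prod_range_reflect (fun i => u + (i:ℝ)) e,
        Finset.prod_range_reflect (fun i => v + (i:ℝ)) e]
  -- Gamma recurrences
  have hGu : Real.Gamma (u + ((e:ℕ):ℝ)) = (∏ i ∈ Finset.range e, (u + (i:ℝ))) * Real.Gamma u :=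
    my_gamma_add_nat hu e
  have hGv : Real.Gamma (v + ((e:ℕ):ℝ)) = (∏ i ∈ Finset.range e, (v + (i:ℝ))) * Real.Gamma v :=
    my_gamma_add_nat hv e
  -- powers of rho
  have hρ : (0:ℝ) < lam/(2*c) := by positivity
  have hlc : lam/c = 2*(lam/(2*c)) := by field_simp
  have hpow : (lam/c)^(2*e) = 4^e * (lam/(2*c))^(2*e) := by
    rw [hlc, mul_pow, pow_mul]
    norm_num
  have hρsplit : (lam/(2*c))^((k+2+1)*e) = (lam/(2*c))^((k+1)*e) * (lam/(2*c))^(2*e) := by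
    rw [← pow_add]
    congr 1
    ring
  -- assemble
  rw [aCo, aCo, harg1, harg2, hpco, hGu, hGv, hpow, hρsplit]
  simp only [← hεdef, ← hedef, ← hudef, ← hvdef]
  field_simp


/-- The hyper-Bessel-type operator `T g (w) = g''(w) + (d/w) g'(w)`. -/
noncomputable def hyperBesselT (d : ℕ) (g : ℝ → ℝ) : ℝ → ℝ :=
  fun w => deriv (deriv g) w + ((d : ℝ) / w) * deriv g w

/-- for `d ≥ 2`, `λ, c > 0`, the radial density
`f(w) = Σ_{k=1}^∞ (λ/(2c))^{k(d-1)} w^{k(d-1)-2} / (Γ(k(d-1)/2) Γ((d-1)(k+1)/2))`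
satisfies the iterated hyper-Bessel ODE `T^(d-1) f (w) = (λ/c)^{2(d-1)} f(w)`
for all `w > 0`, where `T g = g'' + (d/w) g'`. -/
theorem statement8 (d : ℕ) (hd : 2 ≤ d) (lam c : ℝ) (hlam : 0 < lam) (hc : 0 < c)
    (f : ℝ → ℝ)
    (hf : ∀ w : ℝ, f w = ∑' k : ℕ,
      (lam / (2 * c)) ^ ((k + 1) * (d - 1)) *
        w ^ ((((k : ℝ) + 1) * ((d : ℝ) - 1)) - 2) /
        (Real.Gamma (((k : ℝ) + 1) * ((d : ℝ) - 1) / 2) *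
          Real.Gamma (((d : ℝ) - 1) * (((k : ℝ) + 1) + 1) / 2))) :
    ∀ w : ℝ, 0 < w →
      (hyperBesselT d)^[d - 1] f w = (lam / c) ^ (2 * (d - 1)) * f w := by
  have hd1 : (1:ℕ) ≤ d := by omega
  have hεe : (((d-1:ℕ)):ℝ) = (d:ℝ) - 1 := by push_cast [hd1]; ring
  have hε1 : (1:ℝ) ≤ (d:ℝ)-1 := by
    have : (2:ℝ) ≤ (d:ℝ) := by exact_mod_cast hd
    linarith
  have hε0 : (0:ℝ) ≤ (d:ℝ)-1 := by linarith
  -- summability family for coefficients at every level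
  have hbsum : ∀ n m : ℕ, ∀ r : ℝ, 0 < r →
      Summable (fun k => |aCo d lam c k * pCo d n k| * ((k:ℝ)+1)^m * r ^ k) := by
    intro n m r hr
    have hX : (0:ℝ) ≤ ((d:ℝ)-1 + 2*n + 2) * (2*((d:ℝ)-1) + 2*n + 2) := by
      have : (0:ℝ) ≤ (n:ℝ) := Nat.cast_nonneg n
      nlinarith
    have hCn0 : (0:ℝ) ≤ (((d:ℝ)-1 + 2*n + 2) * (2*((d:ℝ)-1) + 2*n + 2))^n := pow_nonneg hX n
    apply Summable.of_nonneg_of_le (fun k => by positivity) (fun k => ?_)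
      ((sumD_aCo d hd lam c hlam hc (2*n+m) hr).mul_left
        ((((d:ℝ)-1 + 2*n + 2) * (2*((d:ℝ)-1) + 2*n + 2))^n))
    have hp := pCo_abs_le d n k hε1
    rw [abs_mul]
    calc |aCo d lam c k| * |pCo d n k| * ((k:ℝ)+1)^m * r^k
        ≤ |aCo d lam c k| * ((((d:ℝ)-1 + 2*n + 2) * (2*((d:ℝ)-1) + 2*n + 2))^n *
            ((k:ℝ)+1)^(2*n)) * ((k:ℝ)+1)^m * r^k := by gcongr
      _ = (((d:ℝ)-1 + 2*n + 2) * (2*((d:ℝ)-1) + 2*n + 2))^n *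
            (|aCo d lam c k| * ((k:ℝ)+1)^(2*n+m) * r^k) := by rw [pow_add]; ring
  -- the main induction
  have main : ∀ n : ℕ, ∀ y : ℝ, 0 < y →
      (hyperBesselT d)^[n] f y =
        ∑' k, (aCo d lam c k * pCo d n k) *
          y ^ (((k:ℝ)+1)*((d:ℝ)-1) + (-2 - 2*(n:ℝ))) := by
    intro n
    induction n with
    | zero =>
      intro y hy
      rw [Function.iterate_zero_apply, hf y]
      apply tsum_congr
      intro k
      rw [pCo]
      simp only [Finset.range_zero, Finset.prod_empty, mul_one]
      rw [aCo, show ((k:ℝ)+1)*((d:ℝ)-1) + (-2 - 2*((0:ℕ):ℝ)) = ((k:ℝ)+1)*((d:ℝ)-1) - 2 by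
        push_cast; ring]
      rw [mul_div_right_comm]
    | succ n IH =>
      intro y hy
      -- summability families
      have hbs : ∀ r : ℝ, 0 < r →
          Summable (fun k => |aCo d lam c k * pCo d n k| * ((k:ℝ)+1) * r ^ k) := by
        intro r hr
        have := hbsum n 1 r hr
        simpa [pow_one] using this
      have hβbound : ∀ k : ℕ, |((k:ℝ)+1)*((d:ℝ)-1) + (-2 - 2*(n:ℝ))| ≤
          ((d:ℝ)+2*(n:ℝ)+2) * ((k:ℝ)+1) := by
        intro k
        have hk0 : (0:ℝ) ≤ (k:ℝ) := Nat.cast_nonneg k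
        have hn0 : (0:ℝ) ≤ (n:ℝ) := Nat.cast_nonneg n
        rw [abs_le]; constructor <;> nlinarith
      have hβ1bound : ∀ k : ℕ, |((k:ℝ)+1)*((d:ℝ)-1) + (-2 - 2*(n:ℝ) - 1)| ≤
          ((d:ℝ)+2*(n:ℝ)+3) * ((k:ℝ)+1) := by
        intro k
        have hk0 : (0:ℝ) ≤ (k:ℝ) := Nat.cast_nonneg k
        have hn0 : (0:ℝ) ≤ (n:ℝ) := Nat.cast_nonneg n
        rw [abs_le]; constructor <;> nlinarith
      have hb1s : ∀ r : ℝ, 0 < r →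
          Summable (fun k => |aCo d lam c k * pCo d n k *
            (((k:ℝ)+1)*((d:ℝ)-1) + (-2 - 2*(n:ℝ)))| * ((k:ℝ)+1) * r ^ k) := by
        intro r hr
        apply Summable.of_nonneg_of_le (fun k => by positivity) (fun k => ?_)
          ((hbsum n 2 r hr).mul_left ((d:ℝ)+2*(n:ℝ)+2))
        rw [abs_mul]
        calc |aCo d lam c k * pCo d n k| * |((k:ℝ)+1)*((d:ℝ)-1) + (-2 - 2*(n:ℝ))| *
              ((k:ℝ)+1) * r^k
            ≤ |aCo d lam c k * pCo d n k| * (((d:ℝ)+2*(n:ℝ)+2) * ((k:ℝ)+1)) *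
              ((k:ℝ)+1) * r^k := by gcongr; exact hβbound k
          _ = ((d:ℝ)+2*(n:ℝ)+2) * (|aCo d lam c k * pCo d n k| * ((k:ℝ)+1)^2 * r^k) := by ring
      -- derivative at level n
      have hfun : ∀ z : ℝ, 0 < z → deriv ((hyperBesselT d)^[n] f) z =
          ∑' k, (aCo d lam c k * pCo d n k * (((k:ℝ)+1)*((d:ℝ)-1) + (-2 - 2*(n:ℝ)))) *
            z ^ (((k:ℝ)+1)*((d:ℝ)-1) + (-2 - 2*(n:ℝ) - 1)) := by
        intro z hz
        have heq : (hyperBesselT d)^[n] f =ᶠ[nhds z]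
            (fun t => ∑' k, (aCo d lam c k * pCo d n k) *
              t ^ (((k:ℝ)+1)*((d:ℝ)-1) + (-2 - 2*(n:ℝ)))) :=
          Filter.eventuallyEq_of_mem (Ioi_mem_nhds hz) (fun t ht => IH t ht)
        rw [heq.deriv_eq]
        rw [(hasDerivAt_rpow_series (fun k => aCo d lam c k * pCo d n k)
          ((d:ℝ)-1) (-2 - 2*(n:ℝ)) hε0 hbs hz).deriv]
        apply tsum_congr
        intro k
        rw [show (((k:ℝ)+1)*((d:ℝ)-1) + (-2 - 2*(n:ℝ))) - 1
            = ((k:ℝ)+1)*((d:ℝ)-1) + (-2 - 2*(n:ℝ) - 1) by ring]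
        ring
      -- now compute level n+1 at y
      rw [Function.iterate_succ_apply']
      show deriv (deriv ((hyperBesselT d)^[n] f)) y +
        ((d:ℝ)/y) * deriv ((hyperBesselT d)^[n] f) y = _
      have heq2 : deriv ((hyperBesselT d)^[n] f) =ᶠ[nhds y]
          (fun z => ∑' k, (aCo d lam c k * pCo d n k *
            (((k:ℝ)+1)*((d:ℝ)-1) + (-2 - 2*(n:ℝ)))) *
            z ^ (((k:ℝ)+1)*((d:ℝ)-1) + (-2 - 2*(n:ℝ) - 1))) :=
        Filter.eventuallyEq_of_mem (Ioi_mem_nhds hy) (fun t ht => hfun t ht)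
      rw [heq2.deriv_eq, hfun y hy]
      rw [(hasDerivAt_rpow_series
        (fun k => aCo d lam c k * pCo d n k * (((k:ℝ)+1)*((d:ℝ)-1) + (-2 - 2*(n:ℝ))))
        ((d:ℝ)-1) (-2 - 2*(n:ℝ) - 1) hε0 hb1s hy).deriv]
      -- combine the two sums
      rw [← tsum_mul_left]
      have hS1 : Summable (fun k =>
          (aCo d lam c k * pCo d n k * (((k:ℝ)+1)*((d:ℝ)-1) + (-2 - 2*(n:ℝ)))) *
            ((((k:ℝ)+1)*((d:ℝ)-1) + (-2 - 2*(n:ℝ) - 1)) *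
              y ^ ((((k:ℝ)+1)*((d:ℝ)-1) + (-2 - 2*(n:ℝ) - 1)) - 1))) := by
        have hb2s : ∀ r : ℝ, 0 < r →
            Summable (fun k => |aCo d lam c k * pCo d n k *
              (((k:ℝ)+1)*((d:ℝ)-1) + (-2 - 2*(n:ℝ))) *
              (((k:ℝ)+1)*((d:ℝ)-1) + (-2 - 2*(n:ℝ) - 1))| * ((k:ℝ)+1) * r ^ k) := by
          intro r hr
          apply Summable.of_nonneg_of_le (fun k => by positivity) (fun k => ?_)
            ((hbsum n 3 r hr).mul_left (((d:ℝ)+2*(n:ℝ)+2) * ((d:ℝ)+2*(n:ℝ)+3)))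
          rw [abs_mul, abs_mul]
          calc |aCo d lam c k * pCo d n k| * |((k:ℝ)+1)*((d:ℝ)-1) + (-2 - 2*(n:ℝ))| *
                |((k:ℝ)+1)*((d:ℝ)-1) + (-2 - 2*(n:ℝ) - 1)| * ((k:ℝ)+1) * r^k
              ≤ |aCo d lam c k * pCo d n k| * (((d:ℝ)+2*(n:ℝ)+2) * ((k:ℝ)+1)) *
                (((d:ℝ)+2*(n:ℝ)+3) * ((k:ℝ)+1)) * ((k:ℝ)+1) * r^k := by
                gcongr
                · exact hβbound k
                · exact hβ1bound k
            _ = (((d:ℝ)+2*(n:ℝ)+2) * ((d:ℝ)+2*(n:ℝ)+3)) *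
                (|aCo d lam c k * pCo d n k| * ((k:ℝ)+1)^3 * r^k) := by ring
        have := summable_rpow_series
          (fun k => aCo d lam c k * pCo d n k * (((k:ℝ)+1)*((d:ℝ)-1) + (-2 - 2*(n:ℝ))) *
            (((k:ℝ)+1)*((d:ℝ)-1) + (-2 - 2*(n:ℝ) - 1)))
          ((d:ℝ)-1) (-2 - 2*(n:ℝ) - 2) hb2s hy
        apply this.congr
        intro k
        rw [show ((k:ℝ)+1)*((d:ℝ)-1) + (-2 - 2*(n:ℝ) - 2)
            = (((k:ℝ)+1)*((d:ℝ)-1) + (-2 - 2*(n:ℝ) - 1)) - 1 by ring]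
        ring
      have hS2 : Summable (fun k => ((d:ℝ)/y) *
          ((aCo d lam c k * pCo d n k * (((k:ℝ)+1)*((d:ℝ)-1) + (-2 - 2*(n:ℝ)))) *
            y ^ (((k:ℝ)+1)*((d:ℝ)-1) + (-2 - 2*(n:ℝ) - 1)))) := by
        exact (summable_rpow_series _ ((d:ℝ)-1) (-2 - 2*(n:ℝ) - 1) hb1s hy).mul_left _
      rw [← Summable.tsum_add hS1 hS2]
      apply tsum_congr
      intro k
      -- termwise algebra
      have hpsucc : pCo d (n+1) k = pCo d n k *
          ((((k:ℝ)+1)*((d:ℝ)-1) - 2 - 2*(n:ℝ)) *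
            ((((k:ℝ)+1)*((d:ℝ)-1) - 2 - 2*(n:ℝ) + ((d:ℝ)-1)))) := by
        rw [pCo, pCo, Finset.prod_range_succ]
      have hrpow : y ^ (((k:ℝ)+1)*((d:ℝ)-1) + (-2 - 2*(n:ℝ) - 1))
          = y ^ ((((k:ℝ)+1)*((d:ℝ)-1) + (-2 - 2*(n:ℝ) - 1)) - 1) * y := by
        rw [← Real.rpow_add_one (ne_of_gt hy)]
        congr 1
        ring
      have hexp : ((k:ℝ)+1)*((d:ℝ)-1) + (-2 - 2*((n:ℕ)+1:ℝ))
          = (((k:ℝ)+1)*((d:ℝ)-1) + (-2 - 2*(n:ℝ) - 1)) - 1 := by push_cast; ring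
      rw [hpsucc]
      rw [show ((k:ℝ)+1)*((d:ℝ)-1) + (-2 - 2*(((n+1):ℕ):ℝ))
          = (((k:ℝ)+1)*((d:ℝ)-1) + (-2 - 2*(n:ℝ) - 1)) - 1 by push_cast; ring]
      rw [hrpow]
      field_simp
      ring
  -- final assembly
  intro w hw
  rw [main (d-1) w hw]
  have hFs : Summable (fun k => (aCo d lam c k * pCo d (d-1) k) *
      w ^ (((k:ℝ)+1)*((d:ℝ)-1) + (-2 - 2*((d-1:ℕ):ℝ)))) := by
    apply summable_rpow_series _ ((d:ℝ)-1) (-2 - 2*((d-1:ℕ):ℝ)) _ hw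
    intro r hr
    have := hbsum (d-1) 1 r hr
    simpa [pow_one] using this
  rw [Summable.tsum_eq_zero_add hFs]
  have hFs1 : Summable (fun k => (aCo d lam c (k+1) * pCo d (d-1) (k+1)) *
      w ^ ((((k+1:ℕ):ℝ)+1)*((d:ℝ)-1) + (-2 - 2*((d-1:ℕ):ℝ)))) := by
    exact (summable_nat_add_iff 1).mpr hFs
  rw [Summable.tsum_eq_zero_add hFs1]
  rw [pCo_zero0 d hd, pCo_zero1 d hd]
  simp only [mul_zero, zero_mul, zero_add]
  rw [hf w, ← tsum_mul_left]
  apply tsum_congr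
  intro k
  have hkey := key_identity d hd lam c hlam hc k
  have hexp : (((k+1+1:ℕ):ℝ)+1)*((d:ℝ)-1) + (-2 - 2*((d-1:ℕ):ℝ))
      = ((k:ℝ)+1)*((d:ℝ)-1) - 2 := by
    rw [hεe]; push_cast; ring
  rw [hexp]
  rw [show ((k:ℕ)+1+1) = (k+2) from rfl, hkey]
  rw [aCo, mul_div_right_comm]
  ring
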